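/- Every semi-connected Condorcet domain D ⊆ L([n]) is a peak-pit domain: for every triple i<j<k, either in the restriction to {i,j,k} of every member of D the alternative j is never the worst (peak condition), or in every such restriction j is never the best (pit condition). -/

import Mathlib

/-- The set of linear orders on `{1,…,n}`, encoded as words (lists) listing the
alternatives from worst to best; such a word is a permutation of `1,2,…,n`. -/
def LinWords (n : ℕ) : Set (List ℕ) := {l | l.Perm (List.range' 1 n)}

/-- Linear orders on a finite ground set `X ⊆ ℕ`, encoded as words. -/
def LinWordsOn (X : Finset ℕ) : Set (List ℕ) := {l | l.Perm (X.sort (· ≤ ·))}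

/-- `ltIn σ i j` : `i` occurs before (i.e. is worse than) `j` in the word `σ`;
this is the relation `i <_σ j`. -/
def ltIn (σ : List ℕ) (i j : ℕ) : Prop := σ.idxOf i < σ.idxOf j

instance (σ : List ℕ) (i j : ℕ) : Decidable (ltIn σ i j) :=
  inferInstanceAs (Decidable (σ.idxOf i < σ.idxOf j))

/-- Three orders in `D` whose restrictions to `{i,j,k}` are exactly the three
cyclic patterns `i<j<k`, `j<k<i`, `k<i<j`. -/
def CyclicTriple (D : Set (List ℕ)) (i j k : ℕ) : Prop :=
  ∃ σ₁ ∈ D, ∃ σ₂ ∈ D, ∃ σ₃ ∈ D,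
    (ltIn σ₁ i j ∧ ltIn σ₁ j k) ∧ (ltIn σ₂ j k ∧ ltIn σ₂ k i) ∧ (ltIn σ₃ k i ∧ ltIn σ₃ i j)

/-- `D` is cyclic: some three distinct alternatives and three orders of `D`
restrict to `{i,j,k}` as `{ijk, jki, kij}` or as `{kji, jik, ikj}`. -/
def IsCyclicDom (D : Set (List ℕ)) : Prop :=
  ∃ i j k : ℕ, i ≠ j ∧ j ≠ k ∧ i ≠ k ∧ (CyclicTriple D i j k ∨ CyclicTriple D k j i)

/-- On the triple `i<j<k`, in every order of `D` the alternative `j` is never the worst. -/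
def PeakCond (D : Set (List ℕ)) (i j k : ℕ) : Prop :=
  ∀ σ ∈ D, ¬ (ltIn σ j i ∧ ltIn σ j k)

/-- On the triple `i<j<k`, in every order of `D` the alternative `j` is never the best. -/
def PitCond (D : Set (List ℕ)) (i j k : ℕ) : Prop :=
  ∀ σ ∈ D, ¬ (ltIn σ i j ∧ ltIn σ k j)

/-- `D` is a peak-pit domain: every triple `i<j<k` in `[n]` satisfies the peak
condition or the pit condition. -/
def IsPeakPit (n : ℕ) (D : Set (List ℕ)) : Prop :=
  ∀ i j k : ℕ, 1 ≤ i → i < j → j < k → k ≤ n → (PeakCond D i j k ∨ PitCond D i j k)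

/-- The four symbols a casting can assign to a triple. -/
inductive Symb | peak | pit | right | left

/-- Membership of (the restriction of) `σ` in the four-element domain `D₃(s)` on
the triple `i<j<k`: for `∩`, `j` is not worst; for `∪`, `j` is not best; for `→`,
`k` is not middle; for `←`, `i` is not middle. -/
def TripleCond : Symb → List ℕ → ℕ → ℕ → ℕ → Prop
  | Symb.peak, σ, i, j, k => ¬ (ltIn σ j i ∧ ltIn σ j k)
  | Symb.pit,  σ, i, j, k => ¬ (ltIn σ i j ∧ ltIn σ k j)
  | Symb.right, σ, i, j, k => ¬ ((ltIn σ i k ∧ ltIn σ k j) ∨ (ltIn σ j k ∧ ltIn σ k i))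
  | Symb.left,  σ, i, j, k => ¬ ((ltIn σ j i ∧ ltIn σ i k) ∨ (ltIn σ k i ∧ ltIn σ i j))

/-- The domain `D(c)` of a casting `c`: all linear orders on `[n]` whose restriction
to every triple `i<j<k` lies in `D₃(c i j k)`. -/
def CastDomain (n : ℕ) (c : ℕ → ℕ → ℕ → Symb) : Set (List ℕ) :=
  {σ | σ ∈ LinWords n ∧ ∀ i j k : ℕ, 1 ≤ i → i < j → j < k → k ≤ n → TripleCond (c i j k) σ i j k}

/-- The set of inversions of a word `σ`: pairs `(i,j)` of alternatives of `σ`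
with `i < j` as integers and `j <_σ i`. -/
def InvPairs (σ : List ℕ) : Set (ℕ × ℕ) :=
  {p | p.1 ∈ σ ∧ p.2 ∈ σ ∧ p.1 < p.2 ∧ ltIn σ p.2 p.1}

/-- `τ` covers `σ` in the weak Bruhat order: `InvPairs τ` is `InvPairs σ` plus exactly one pair. -/
def Covers (τ σ : List ℕ) : Prop :=
  ∃ p : ℕ × ℕ, p ∉ InvPairs σ ∧ InvPairs τ = insert p (InvPairs σ)

/-- Adjacency in the Bruhat graph. -/
def BruhatAdj (σ τ : List ℕ) : Prop := Covers τ σ ∨ Covers σ τ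

/-- A path in the Bruhat graph from `σ` to `τ` all of whose vertices lie in `D`. -/
def PathIn (D : Set (List ℕ)) (σ τ : List ℕ) : Prop :=
  ∃ (m : ℕ) (f : ℕ → List ℕ), f 0 = σ ∧ f m = τ ∧
    (∀ t ≤ m, f t ∈ D) ∧ ∀ t < m, BruhatAdj (f t) (f (t + 1))

/-- `D` is semi-connected (ground set `[n]`): it contains the increasing order `α`
and the decreasing order `ω` and a Bruhat path from `α` to `ω` inside `D`. -/
def SemiConnected (n : ℕ) (D : Set (List ℕ)) : Prop :=
  List.range' 1 n ∈ D ∧ (List.range' 1 n).reverse ∈ D ∧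
    PathIn D (List.range' 1 n) (List.range' 1 n).reverse

/-- `D` is semi-connected on the ground set `X`. -/
def SemiConnectedOn (X : Finset ℕ) (D : Set (List ℕ)) : Prop :=
  X.sort (· ≤ ·) ∈ D ∧ (X.sort (· ≤ ·)).reverse ∈ D ∧
    PathIn D (X.sort (· ≤ ·)) (X.sort (· ≤ ·)).reverse

/-- `A` is an ideal of the order `σ`: a downward-closed (w.r.t. `<_σ`) set of
alternatives of `σ`, i.e. an initial segment of the word `σ`. -/
def IsIdeal (σ : List ℕ) (A : Set ℕ) : Prop :=
  (∀ x ∈ A, x ∈ σ) ∧ ∀ x ∈ A, ∀ y ∈ σ, ltIn σ y x → y ∈ A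

/-- The set system of all ideals of `σ`. -/
def IdSet (σ : List ℕ) : Set (Set ℕ) := {A | IsIdeal σ A}

/-- The convex hull of a set of naturals: the minimal integer interval containing it. -/
def hull (S : Set ℕ) : Set ℕ := {x | ∃ a ∈ S, ∃ b ∈ S, a ≤ x ∧ x ≤ b}

/-- `A` and `B` are separated: the convex hulls of `A \ B` and `B \ A` are disjoint. -/
def Separated (A B : Set ℕ) : Prop := Disjoint (hull (A \ B)) (hull (B \ A))

/-- A separated set system: any two members are separated. -/
def SepSystem (𝒳 : Set (Set ℕ)) : Prop := ∀ A ∈ 𝒳, ∀ B ∈ 𝒳, Separated A B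

/-- The concatenation `σ * τ` of a word on `[n]` with a word on `[n']`, the latter
shifted by `n`. -/
def concatWord (n : ℕ) (σ τ : List ℕ) : List ℕ := σ ++ τ.map (· + n)

/-- The concatenation `{σ * τ : σ ∈ D, τ ∈ D'}` of two domains. -/
def ConcatDomain (n : ℕ) (D D' : Set (List ℕ)) : Set (List ℕ) :=
  {l | ∃ σ ∈ D, ∃ τ ∈ D', l = concatWord n σ τ}

/-- The simple-majority relation `i sm(ν) j` for an opinion `ν` on the finite domain `D`. -/
def SM (D : Finset (List ℕ)) (ν : List ℕ → ℕ) (i j : ℕ) : Prop :=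
  (∑ σ ∈ D, if ltIn σ j i then ν σ else 0) > (∑ σ ∈ D, if ltIn σ i j then ν σ else 0)

/-- Fishburn's domain (the alternating scheme): for each triple `i<j<k`, if `j` is
even then `j` is not the worst of `{i,j,k}`, and if `j` is odd then `j` is not the best. -/
def Fishburn (n : ℕ) : Set (List ℕ) :=
  {σ | σ ∈ LinWords n ∧ ∀ i j k : ℕ, 1 ≤ i → i < j → j < k → k ≤ n →
    (Even j → ¬ (ltIn σ j i ∧ ltIn σ j k)) ∧ (Odd j → ¬ (ltIn σ i j ∧ ltIn σ k j))}

/-- `γ n`: the maximum cardinality of a peak-pit domain in `L([n])`. -/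
noncomputable def gamma (n : ℕ) : ℕ :=
  sSup {m | ∃ D : Set (List ℕ), D ⊆ LinWords n ∧ IsPeakPit n D ∧ D.ncard = m}

section Aux

lemma mem_of_lin {n : ℕ} {σ : List ℕ} (hσ : σ ∈ LinWords n) {a : ℕ}
    (h1 : 1 ≤ a) (h2 : a ≤ n) : a ∈ σ := by
  have : a ∈ List.range' 1 n := List.mem_range'_1.2 ⟨h1, by omega⟩
  exact (List.Perm.mem_iff hσ).2 this

lemma idxOf_inj' {σ : List ℕ} {a b : ℕ} (ha : a ∈ σ) (hb : b ∈ σ)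
    (h : σ.idxOf a = σ.idxOf b) : a = b := by
  have ha' : σ.idxOf a < σ.length := List.idxOf_lt_length_iff.2 ha
  have hb' : σ.idxOf b < σ.length := List.idxOf_lt_length_iff.2 hb
  have e1 := List.idxOf_get ha'
  have e2 := List.idxOf_get hb'
  rw [← e1, ← e2]
  congr 1
  exact Fin.ext h

lemma ltIn_total {σ : List ℕ} {a b : ℕ} (ha : a ∈ σ) (hb : b ∈ σ) (hab : a ≠ b) :
    ltIn σ a b ∨ ltIn σ b a := by
  rcases lt_trichotomy (σ.idxOf a) (σ.idxOf b) with h | h | h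
  · exact Or.inl h
  · exact absurd (idxOf_inj' ha hb h) hab
  · exact Or.inr h

lemma ltIn_asymm {σ : List ℕ} {a b : ℕ} (h : ltIn σ a b) : ¬ ltIn σ b a :=
  Nat.lt_asymm h

lemma ltIn_trans {σ : List ℕ} {a b c : ℕ} (h1 : ltIn σ a b) (h2 : ltIn σ b c) :
    ltIn σ a c := Nat.lt_trans h1 h2

lemma ltIn_of_pairwise {R : ℕ → ℕ → Prop} {l : List ℕ} (hl : l.Pairwise R) {a b : ℕ}
    (ha : a ∈ l) (hb : b ∈ l) (h : ltIn l a b) : R a b := by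
  have ha' : l.idxOf a < l.length := List.idxOf_lt_length_iff.2 ha
  have hb' : l.idxOf b < l.length := List.idxOf_lt_length_iff.2 hb
  have := List.pairwise_iff_get.1 hl ⟨l.idxOf a, ha'⟩ ⟨l.idxOf b, hb'⟩ h
  rwa [List.idxOf_get ha', List.idxOf_get hb'] at this

lemma ltIn_alpha {n a b : ℕ} (h1 : 1 ≤ a) (hab : a < b) (h2 : b ≤ n) :
    ltIn (List.range' 1 n) a b := by
  have ha : a ∈ List.range' 1 n := List.mem_range'_1.2 ⟨h1, by omega⟩
  have hb : b ∈ List.range' 1 n := List.mem_range'_1.2 ⟨by omega, by omega⟩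
  rcases ltIn_total ha hb (Nat.ne_of_lt hab) with h | h
  · exact h
  · have := ltIn_of_pairwise (List.pairwise_lt_range' (s := 1) (n := n)) hb ha h
    omega

lemma ltIn_omega {n a b : ℕ} (h1 : 1 ≤ a) (hab : a < b) (h2 : b ≤ n) :
    ltIn (List.range' 1 n).reverse b a := by
  have ha : a ∈ (List.range' 1 n).reverse := by
    rw [List.mem_reverse]; exact List.mem_range'_1.2 ⟨h1, by omega⟩
  have hb : b ∈ (List.range' 1 n).reverse := by
    rw [List.mem_reverse]; exact List.mem_range'_1.2 ⟨by omega, by omega⟩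
  have hpw : (List.range' 1 n).reverse.Pairwise (fun x y => y < x) :=
    List.pairwise_reverse.2 (List.pairwise_lt_range' (s := 1) (n := n))
  rcases ltIn_total hb ha (Nat.ne_of_gt hab) with h | h
  · exact h
  · have := ltIn_of_pairwise hpw ha hb h
    omega

lemma invPairs_iff {σ : List ℕ} {a b : ℕ} (ha : a ∈ σ) (hb : b ∈ σ) (hab : a < b) :
    (a, b) ∈ InvPairs σ ↔ ¬ ltIn σ a b := by
  constructor
  · rintro ⟨-, -, -, h⟩
    exact ltIn_asymm h
  · intro h
    refine ⟨ha, hb, hab, ?_⟩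
    rcases ltIn_total ha hb (Nat.ne_of_lt hab) with h' | h'
    · exact absurd h' h
    · exact h'

lemma adj_pres {σ τ : List ℕ} (h : BruhatAdj σ τ) {q r : ℕ × ℕ} (hqr : q ≠ r)
    (hq : ¬ ((q ∈ InvPairs σ) ↔ (q ∈ InvPairs τ))) :
    (r ∈ InvPairs σ) ↔ (r ∈ InvPairs τ) := by
  rcases h with ⟨p, hp, heq⟩ | ⟨p, hp, heq⟩
  · by_cases hrp : r = p
    · subst hrp
      exfalso
      apply hq
      have hqp : q ≠ r := hqr
      rw [heq, Set.mem_insert_iff]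
      constructor
      · intro h'; exact Or.inr h'
      · rintro (h' | h')
        · exact absurd h' hqp
        · exact h'
    · rw [heq, Set.mem_insert_iff]
      constructor
      · intro h'; exact Or.inr h'
      · rintro (h' | h')
        · exact absurd h' hrp
        · exact h'
  · by_cases hrp : r = p
    · subst hrp
      exfalso
      apply hq
      rw [heq, Set.mem_insert_iff]
      constructor
      · rintro (h' | h')
        · exact absurd h' hqr
        · exact h'
      · intro h'; exact Or.inr h'
    · rw [heq, Set.mem_insert_iff]
      constructor
      · rintro (h' | h')
        · exact absurd h' hrp
        · exact h'
      · intro h'; exact Or.inr h'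

lemma adj_ltIn_pres {n : ℕ} {σ τ : List ℕ} (hσ : σ ∈ LinWords n) (hτ : τ ∈ LinWords n)
    (h : BruhatAdj σ τ) {a b a' b' : ℕ}
    (ha1 : 1 ≤ a) (hab : a < b) (hb2 : b ≤ n)
    (ha1' : 1 ≤ a') (hab' : a' < b') (hb2' : b' ≤ n)
    (hne : (a, b) ≠ (a', b'))
    (hflip : ¬ (ltIn σ a b ↔ ltIn τ a b)) : (ltIn σ a' b' ↔ ltIn τ a' b') := by
  have e1 : ((a, b) ∈ InvPairs σ) ↔ ¬ ltIn σ a b :=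
    invPairs_iff (mem_of_lin hσ ha1 (le_of_lt (lt_of_lt_of_le hab hb2)))
      (mem_of_lin hσ (by omega) hb2) hab
  have e2 : ((a, b) ∈ InvPairs τ) ↔ ¬ ltIn τ a b :=
    invPairs_iff (mem_of_lin hτ ha1 (le_of_lt (lt_of_lt_of_le hab hb2)))
      (mem_of_lin hτ (by omega) hb2) hab
  have e3 : ((a', b') ∈ InvPairs σ) ↔ ¬ ltIn σ a' b' :=
    invPairs_iff (mem_of_lin hσ ha1' (le_of_lt (lt_of_lt_of_le hab' hb2')))
      (mem_of_lin hσ (by omega) hb2') hab'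
  have e4 : ((a', b') ∈ InvPairs τ) ↔ ¬ ltIn τ a' b' :=
    invPairs_iff (mem_of_lin hτ ha1' (le_of_lt (lt_of_lt_of_le hab' hb2')))
      (mem_of_lin hτ (by omega) hb2') hab'
  have hq : ¬ (((a, b) ∈ InvPairs σ) ↔ ((a, b) ∈ InvPairs τ)) := by
    rw [e1, e2]; tauto
  have := adj_pres h hne hq
  rw [e3, e4] at this
  tauto

end Aux


/-- every semi-connected Condorcet domain is a peak-pit domain. -/
theorem statement_5 (n : ℕ) (D : Set (List ℕ)) (hD : D ⊆ LinWords n)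
    (hCD : ¬ IsCyclicDom D) (hsc : SemiConnected n D) :
    IsPeakPit n D := by
  intro i j k hi hij hjk hkn
  obtain ⟨hα, hω, m, f, hf0, hfm, hmemD, hadj⟩ := hsc
  have hik : i < k := lt_trans hij hjk
  have hjn : j ≤ n := by omega
  have hin : i ≤ n := by omega
  have hj1 : 1 ≤ j := by omega
  have hk1 : 1 ≤ k := by omega
  have hijne : i ≠ j := Nat.ne_of_lt hij
  have hjkne : j ≠ k := Nat.ne_of_lt hjk
  have hikne : i ≠ k := Nat.ne_of_lt hik
  -- every path vertex is a linear word
  have hlin : ∀ t ≤ m, f t ∈ LinWords n := fun t ht => hD (hmemD t ht)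
  -- find the first time the pair (i,k) is inverted
  have hQm : ¬ ltIn (f m) i k := by
    rw [hfm]; exact ltIn_asymm (ltIn_omega hi hik hkn)
  have hex : ∃ t, ¬ ltIn (f t) i k := ⟨m, hQm⟩
  set t0 := Nat.find hex with ht0def
  have h0 : ¬ ltIn (f t0) i k := Nat.find_spec hex
  have ht0m : t0 ≤ m := Nat.find_le hQm
  have ht0pos : t0 ≠ 0 := by
    intro h
    apply h0
    rw [h, hf0]
    exact ltIn_alpha hi hik hkn
  obtain ⟨t1, ht1⟩ : ∃ t1, t0 = t1 + 1 := ⟨t0 - 1, by omega⟩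
  have h1 : ltIn (f t1) i k := by
    have := Nat.find_min hex (m := t1) (by omega)
    tauto
  have ht1m : t1 ≤ m := by omega
  have hadj1 : BruhatAdj (f t1) (f t0) := by
    rw [ht1]; exact hadj t1 (by omega)
  have hlin1 : f t1 ∈ LinWords n := hlin t1 ht1m
  have hlin0 : f t0 ∈ LinWords n := hlin t0 ht0m
  -- memberships of i, j, k in path vertices
  have memi1 : i ∈ f t1 := mem_of_lin hlin1 hi hin
  have memj1 : j ∈ f t1 := mem_of_lin hlin1 hj1 hjn
  have memk1 : k ∈ f t1 := mem_of_lin hlin1 hk1 hkn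
  have memi0 : i ∈ f t0 := mem_of_lin hlin0 hi hin
  have memj0 : j ∈ f t0 := mem_of_lin hlin0 hj1 hjn
  have memk0 : k ∈ f t0 := mem_of_lin hlin0 hk1 hkn
  -- the (i,k) boolean flips at this step, so (i,j) and (j,k) stay
  have hflip : ¬ (ltIn (f t1) i k ↔ ltIn (f t0) i k) := by tauto
  have eij : ltIn (f t1) i j ↔ ltIn (f t0) i j :=
    adj_ltIn_pres hlin1 hlin0 hadj1 hi hik hkn hi hij hjn
      (by simp [Prod.ext_iff]; omega) hflip
  have ejk : ltIn (f t1) j k ↔ ltIn (f t0) j k :=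
    adj_ltIn_pres hlin1 hlin0 hadj1 hi hik hkn hj1 hjk hkn
      (by simp [Prod.ext_iff]; omega) hflip
  -- ltIn k i at t0
  have hki0 : ltIn (f t0) k i := by
    rcases ltIn_total memi0 memk0 hikne with h | h
    · exact absurd h h0
    · exact h
  -- not both i<j and j<k at t0
  have hnot0 : ¬ (ltIn (f t0) i j ∧ ltIn (f t0) j k) := by
    rintro ⟨h2, h3⟩; exact h0 (ltIn_trans h2 h3)
  -- at t1: i<j or j<k holds
  have hor1 : ltIn (f t1) i j ∨ ltIn (f t1) j k := by
    by_contra hcon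
    push_neg at hcon
    obtain ⟨hcij, hcjk⟩ := hcon
    have hji : ltIn (f t1) j i := by
      rcases ltIn_total memi1 memj1 hijne with h | h
      · exact absurd h hcij
      · exact h
    have hkj : ltIn (f t1) k j := by
      rcases ltIn_total memj1 memk1 hjkne with h | h
      · exact absurd h hcjk
      · exact h
    exact ltIn_asymm h1 (ltIn_trans hkj hji)
  -- facts about α and ω as members of D
  have hαij : ltIn (List.range' 1 n) i j := ltIn_alpha hi hij hjn
  have hαjk : ltIn (List.range' 1 n) j k := ltIn_alpha hj1 hjk hkn
  have hωkj : ltIn (List.range' 1 n).reverse k j := ltIn_omega hj1 hjk hkn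
  have hωji : ltIn (List.range' 1 n).reverse j i := ltIn_omega hi hij hjn
  by_cases hb1 : ltIn (f t0) i j
  · -- case (i<j, ¬(j<k)) : f t1 has pattern ikj, f t0 has pattern kij ⇒ Peak
    left
    have hb2 : ¬ ltIn (f t0) j k := fun h => hnot0 ⟨hb1, h⟩
    have hkj0 : ltIn (f t0) k j := by
      rcases ltIn_total memj0 memk0 hjkne with h | h
      · exact absurd h hb2
      · exact h
    have hkj1 : ltIn (f t1) k j := by
      rcases ltIn_total memj1 memk1 hjkne with h | h
      · exact absurd ((ejk).1 h) hb2
      · exact h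
    intro σ hσ ⟨hji, hjk'⟩
    apply hCD
    have hσlin : σ ∈ LinWords n := hD hσ
    have memiσ : i ∈ σ := mem_of_lin hσlin hi hin
    have memkσ : k ∈ σ := mem_of_lin hσlin hk1 hkn
    refine ⟨i, j, k, hijne, hjkne, hikne, ?_⟩
    by_cases hikσ : ltIn σ i k
    · -- σ has pattern jik : cyclic {kji, jik, ikj}
      exact Or.inr ⟨_, hω, σ, hσ, f t1, hmemD t1 ht1m, ⟨hωkj, hωji⟩, ⟨hji, hikσ⟩, h1, hkj1⟩
    · have hkiσ : ltIn σ k i := by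
        rcases ltIn_total memiσ memkσ hikne with h | h
        · exact absurd h hikσ
        · exact h
      -- σ has pattern jki : cyclic {ijk, jki, kij}
      exact Or.inl ⟨_, hα, σ, hσ, f t0, hmemD t0 ht0m, ⟨hαij, hαjk⟩, ⟨hjk', hkiσ⟩, hki0, hb1⟩
  · -- case (¬(i<j), j<k) : f t1 has pattern jik, f t0 has pattern jki ⇒ Pit
    right
    have hji0 : ltIn (f t0) j i := by
      rcases ltIn_total memi0 memj0 hijne with h | h
      · exact absurd h hb1
      · exact h
    have hjk1 : ltIn (f t1) j k := by
      rcases hor1 with h | h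
      · exact absurd (eij.1 h) hb1
      · exact h
    have hjk0 : ltIn (f t0) j k := ejk.1 hjk1
    have hji1 : ltIn (f t1) j i := by
      rcases ltIn_total memi1 memj1 hijne with h | h
      · exact absurd (eij.1 h) hb1
      · exact h
    intro σ hσ ⟨hijσ, hkjσ⟩
    apply hCD
    have hσlin : σ ∈ LinWords n := hD hσ
    have memiσ : i ∈ σ := mem_of_lin hσlin hi hin
    have memkσ : k ∈ σ := mem_of_lin hσlin hk1 hkn
    refine ⟨i, j, k, hijne, hjkne, hikne, ?_⟩
    by_cases hikσ : ltIn σ i k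
    · -- σ has pattern ikj : cyclic {kji, jik, ikj}
      exact Or.inr ⟨_, hω, f t1, hmemD t1 ht1m, σ, hσ, ⟨hωkj, hωji⟩, ⟨hji1, h1⟩, hikσ, hkjσ⟩
    · have hkiσ : ltIn σ k i := by
        rcases ltIn_total memiσ memkσ hikne with h | h
        · exact absurd h hikσ
        · exact h
      -- σ has pattern kij : cyclic {ijk, jki, kij}
      exact Or.inl ⟨_, hα, f t0, hmemD t0 ht0m, σ, hσ, ⟨hαij, hαjk⟩, ⟨hjk0, hki0⟩, hkiσ, hijσ⟩
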